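/- Let F : C → B be a Galois covering of k-categories, let x_b ∈ F⁻¹(b) be a choice of fibre objects with induced Aut₁F-grading Z, and let (t_b) be a family of elements of Aut₁F, giving the second choice of fibre objects t_b·x_b with induced grading Z'. Let χ : Aut₁F → k be an additive character (χ(st) = χ(s) + χ(t)), and let D and D' be families of k-linear endomorphisms of the morphism modules of B satisfying D(f) = χ(s) • f for f ∈ Z_s(c,b) and D'(f) = χ(s) • f for f ∈ Z'_s(c,b). Then for every morphism f ∈ B(b,c), D(f) − D'(f) = (χ(t_c) − χ(t_b)) • f; in particular D − D' is the inner derivation associated to the family α_b = χ(t_b) • id_b. -/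

import Mathlib

open CategoryTheory

universe w v u

section CoveringDefs

variable (k : Type w) [CommRing k]

/-- A functor between `k`-linear categories is `k`-linear:
it is additive and commutes with the scalar action on morphisms. -/
def IsLinearFunctor {C : Type u} [Category.{v} C] [Preadditive C] [CategoryTheory.Linear k C]
    {B : Type u} [Category.{v} B] [Preadditive B] [CategoryTheory.Linear k B]
    (F : C ⥤ B) : Prop :=
  (∀ (x y : C) (f g : x ⟶ y), F.map (f + g) = F.map f + F.map g) ∧
  (∀ (x y : C) (r : k) (f : x ⟶ y), F.map (r • f) = r • F.map f)

variable {C : Type u} [Category.{v} C] [Preadditive C] [CategoryTheory.Linear k C]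
variable {B : Type u} [Category.{v} B] [Preadditive B] [CategoryTheory.Linear k B]

/-- The canonical map `⊕_{y ∈ F⁻¹(c)} C(x,y) →+ B(F(x),c)` induced by `F`
on the source star. -/
noncomputable def starOutHom (F : C ⥤ B) (hF : IsLinearFunctor k F) (x : C) (c : B) :
    (DirectSum {y : C // F.obj y = c} (fun y => (x ⟶ y.1))) →+ (F.obj x ⟶ c) := by
  classical
  exact DirectSum.toAddMonoid fun y =>
    AddMonoidHom.mk' (fun f => F.map f ≫ eqToHom y.2)
      (fun f g => by (try simp only []); rw [hF.1 _ _ f g, Preadditive.add_comp])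

/-- The canonical map `⊕_{y ∈ F⁻¹(c)} C(y,x) →+ B(c,F(x))` induced by `F`
on the target star. -/
noncomputable def starInHom (F : C ⥤ B) (hF : IsLinearFunctor k F) (x : C) (c : B) :
    (DirectSum {y : C // F.obj y = c} (fun y => (y.1 ⟶ x))) →+ (c ⟶ F.obj x) := by
  classical
  exact DirectSum.toAddMonoid fun y =>
    AddMonoidHom.mk' (fun f => eqToHom y.2.symm ≫ F.map f)
      (fun f g => by (try simp only []); rw [hF.1 _ _ f g, Preadditive.comp_add])

/-- `F : C ⥤ B` is a covering of `k`-categories: it is a `k`-linear functor,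
surjective on objects, inducing bijections on all source and target stars. -/
def IsCovering (F : C ⥤ B) : Prop :=
  ∃ hF : IsLinearFunctor k F,
    Function.Surjective F.obj ∧
    (∀ (x : C) (c : B), Function.Bijective (starOutHom k F hF x c)) ∧
    (∀ (x : C) (c : B), Function.Bijective (starInHom k F hF x c))

end CoveringDefs

/-- A `k`-category is connected if the equivalence relation generated by
"there is a nonzero morphism from `x` to `y`" relates any two objects. -/
def IsConnectedKCat (C : Type u) [Category.{v} C] [Preadditive C] : Prop :=
  ∀ x y : C, Relation.EqvGen (fun a b : C => ∃ f : a ⟶ b, f ≠ 0) x y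

section GaloisDefs

variable (k : Type w) [CommRing k]
variable {C : Type u} [Category.{v} C] [Preadditive C] [CategoryTheory.Linear k C]
variable {B : Type u} [Category.{v} B] [Preadditive B] [CategoryTheory.Linear k B]
variable {D : Type u} [Category.{v} D] [Preadditive D] [CategoryTheory.Linear k D]

/-- `H` belongs to `Aut₁ F`: it is an invertible `k`-linear endofunctor with `F ∘ H = F`. -/
def MemAut1 (F : C ⥤ B) (H : C ⥤ C) : Prop :=
  IsLinearFunctor k H ∧
  (∃ Hinv : C ⥤ C, H ⋙ Hinv = 𝟭 C ∧ Hinv ⋙ H = 𝟭 C) ∧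
  H ⋙ F = F

/-- A covering is Galois if its source is connected and `Aut₁ F` acts transitively
on some fibre. -/
def IsGaloisCovering (F : C ⥤ B) : Prop :=
  IsCovering k F ∧ IsConnectedKCat C ∧
  ∃ b₀ : B, ∀ x y : C, F.obj x = b₀ → F.obj y = b₀ →
    ∃ H : C ⥤ C, MemAut1 k F H ∧ H.obj x = y

/-- A morphism `(H, J)` of coverings from `F : C ⥤ B` to `G : D ⥤ B`:
`H` and `J` are `k`-linear, `J` is an isomorphism which is the identity on objects,
and `G ∘ H = J ∘ F`. -/
def IsCoveringMorphism (F : C ⥤ B) (G : D ⥤ B) (H : C ⥤ D) (J : B ⥤ B) : Prop :=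
  IsLinearFunctor k H ∧ IsLinearFunctor k J ∧
  (∃ Jinv : B ⥤ B, J ⋙ Jinv = 𝟭 B ∧ Jinv ⋙ J = 𝟭 B) ∧
  (∀ b : B, J.obj b = b) ∧
  H ⋙ G = F ⋙ J

end GaloisDefs

/-- A universal covering: a Galois covering `U` such that for every Galois covering
`F : C ⥤ B` and every pair of objects `u₀`, `c₀` above the same object of `B`,
there is a unique `k`-linear functor `H` with `F ∘ H = U` and `H u₀ = c₀`. -/
def IsUniversalCovering (k : Type w) [CommRing k]
    {U' : Type u} [Category.{v} U'] [Preadditive U'] [CategoryTheory.Linear k U']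
    {B : Type u} [Category.{v} B] [Preadditive B] [CategoryTheory.Linear k B]
    (U : U' ⥤ B) : Prop :=
  IsGaloisCovering k U ∧
  ∀ (C : Type u) [Category.{v} C] [Preadditive C] [CategoryTheory.Linear k C]
    (F : C ⥤ B), IsGaloisCovering k F →
    ∀ (u₀ : U') (c₀ : C), U.obj u₀ = F.obj c₀ →
      ∃! H : U' ⥤ C, IsLinearFunctor k H ∧ H ⋙ F = U ∧ H.obj u₀ = c₀

/-- Given a functor `F : C ⥤ B`, a choice `x` of objects of `C` above each object of `B`,
and an endofunctor `H` of `C`, the subset `Z_H(c,b) = F(C(x_b, H x_c))` of `B(b,c)`. -/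
def gradeSet {C : Type u} [Category.{v} C] {B : Type u} [Category.{v} B]
    (F : C ⥤ B) (x : B → C) (H : C ⥤ C) (b c : B) : Set (b ⟶ c) :=
  {g | ∃ (h₁ : b = F.obj (x b)) (h₂ : F.obj (H.obj (x c)) = c)
        (f : x b ⟶ H.obj (x c)), g = eqToHom h₁ ≫ F.map f ≫ eqToHom h₂}

/-- The homogeneous component `Z_H(c,b)` as a `k`-submodule of `B(b,c)`. -/
noncomputable def gradeSubmodule (k : Type w) [CommRing k]
    {C : Type u} [Category.{v} C]
    {B : Type u} [Category.{v} B] [Preadditive B] [CategoryTheory.Linear k B]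
    (F : C ⥤ B) (x : B → C) (H : C ⥤ C) (b c : B) : Submodule k (b ⟶ c) :=
  Submodule.span k (gradeSet F x H b c)

section Aux

open CategoryTheory DirectSum

set_option linter.unusedSectionVars false

variable {k : Type w} [CommRing k]
variable {C : Type u} [Category.{v} C] [Preadditive C] [CategoryTheory.Linear k C]
variable {B : Type u} [Category.{v} B] [Preadditive B] [CategoryTheory.Linear k B]
variable {F : C ⥤ B}

lemma starOutHom_of (hF : IsLinearFunctor k F) (x : C) (c : B) [DecidableEq {y : C // F.obj y = c}]
    (y : {y : C // F.obj y = c}) (f : x ⟶ y.1) :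
    starOutHom k F hF x c (DirectSum.of (fun y : {y : C // F.obj y = c} => (x ⟶ y.1)) y f)
      = F.map f ≫ eqToHom y.2 := by
  erw [DirectSum.toAddMonoid_of]; rfl

lemma starInHom_of (hF : IsLinearFunctor k F) (x : C) (c : B) [DecidableEq {y : C // F.obj y = c}]
    (y : {y : C // F.obj y = c}) (f : y.1 ⟶ x) :
    starInHom k F hF x c (DirectSum.of (fun y : {y : C // F.obj y = c} => (y.1 ⟶ x)) y f)
      = eqToHom y.2.symm ≫ F.map f := by
  erw [DirectSum.toAddMonoid_of]; rfl

lemma memAut1_id : MemAut1 k F (𝟭 C) :=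
  ⟨⟨fun _ _ _ _ => rfl, fun _ _ _ _ => rfl⟩, ⟨𝟭 C, Functor.id_comp _, Functor.id_comp _⟩,
    Functor.id_comp _⟩

lemma memAut1_comp {H H' : C ⥤ C} (h : MemAut1 k F H) (h' : MemAut1 k F H') :
    MemAut1 k F (H ⋙ H') := by
  obtain ⟨⟨ha, hs⟩, ⟨Hi, hi1, hi2⟩, hc⟩ := h
  obtain ⟨⟨ha', hs'⟩, ⟨Hi', hi1', hi2'⟩, hc'⟩ := h'
  refine ⟨⟨fun a b f g => ?_, fun a b r f => ?_⟩, ⟨Hi' ⋙ Hi, ?_, ?_⟩, ?_⟩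
  · simp only [Functor.comp_map]; rw [ha, ha']
  · simp only [Functor.comp_map]; rw [hs, hs']
  · rw [Functor.assoc, ← Functor.assoc H', hi1', Functor.id_comp, hi1]
  · rw [Functor.assoc, ← Functor.assoc Hi, hi2, Functor.id_comp, hi2']
  · rw [Functor.assoc, hc', hc]

lemma map_injective_of_inv {C : Type u} [Category.{v} C] {H Hi : C ⥤ C} (h1 : H ⋙ Hi = 𝟭 C) :
    ∀ {a b : C} (u v : a ⟶ b), H.map u = H.map v → u = v := by
  intro a b u v huv
  have h := Functor.congr_hom h1 u
  have h' := Functor.congr_hom h1 v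
  simp only [Functor.comp_map, Functor.id_map] at h h'
  rw [huv] at h
  have key := h.symm.trans h'
  rw [cancel_epi, cancel_mono] at key
  exact key

lemma memAut1_inv {H Hi : C ⥤ C} (h : MemAut1 k F H) (h1 : H ⋙ Hi = 𝟭 C)
    (h2 : Hi ⋙ H = 𝟭 C) : MemAut1 k F Hi := by
  obtain ⟨⟨ha, hs⟩, _, hc⟩ := h
  refine ⟨⟨fun a b f g => ?_, fun a b r f => ?_⟩, ⟨H, h2, h1⟩, ?_⟩
  · apply map_injective_of_inv h1
    have e1 := Functor.congr_hom h2 (f + g)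
    have e2 := Functor.congr_hom h2 f
    have e3 := Functor.congr_hom h2 g
    simp only [Functor.comp_map, Functor.id_map] at e1 e2 e3
    rw [ha, e1, e2, e3]
    simp [Preadditive.add_comp, Preadditive.comp_add]
  · apply map_injective_of_inv h1
    have e1 := Functor.congr_hom h2 (r • f)
    have e2 := Functor.congr_hom h2 f
    simp only [Functor.comp_map, Functor.id_map] at e1 e2
    rw [hs, e1, e2]
    simp [Linear.comp_smul, Linear.smul_comp]
  · calc Hi ⋙ F = Hi ⋙ (H ⋙ F) := by rw [hc]
      _ = (Hi ⋙ H) ⋙ F := (Functor.assoc _ _ _).symm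
      _ = 𝟭 C ⋙ F := by rw [h2]
      _ = F := Functor.id_comp F

end Aux
section Step
open CategoryTheory DirectSum
set_option linter.unusedSectionVars false
set_option maxHeartbeats 1000000
variable {k : Type w} [CommRing k]
variable {C : Type u} [Category.{v} C] [Preadditive C] [CategoryTheory.Linear k C]
variable {B : Type u} [Category.{v} B] [Preadditive B] [CategoryTheory.Linear k B]
variable {F : C ⥤ B}

lemma trans_step_fwd (hLin : IsLinearFunctor k F)
    (hOut : ∀ (x : C) (c : B), Function.Bijective (starOutHom k F hLin x c))
    (hIn : ∀ (x : C) (c : B), Function.Bijective (starInHom k F hLin x c))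
    {y z : C} (f : y ⟶ z) (hf : f ≠ 0)
    (hT : ∀ w w' : C, F.obj w = F.obj y → F.obj w' = F.obj y →
      ∃ H, MemAut1 k F H ∧ H.obj w = w') :
    ∀ z₁ z₂ : C, F.obj z₁ = F.obj z → F.obj z₂ = F.obj z →
      ∃ H, MemAut1 k F H ∧ H.obj z₁ = z₂ := by
  classical
  -- core claim: every z' in the fibre of F.obj z is of the form H.obj z
  have core : ∀ z' : C, F.obj z' = F.obj z → ∃ H, MemAut1 k F H ∧ H.obj z = z' := by
    intro z' hz'
    have hsel : ∀ w : {w : C // F.obj w = F.obj y}, ∃ K Ki : C ⥤ C,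
        MemAut1 k F K ∧ K.obj y = w.1 ∧ K ⋙ Ki = 𝟭 C ∧ Ki ⋙ K = 𝟭 C := by
      intro w
      obtain ⟨K, hK, hKy⟩ := hT y w.1 rfl w.2
      obtain ⟨Ki, c1, c2⟩ := hK.2.1
      exact ⟨K, Ki, hK, hKy, c1, c2⟩
    choose K Ki hmem hobj hc1 hc2 using hsel
    have hKimem : ∀ w, MemAut1 k F (Ki w) := fun w => memAut1_inv (hmem w) (hc1 w) (hc2 w)
    have pzw : ∀ w, F.obj ((Ki w).obj z') = F.obj z := fun w =>
      (Functor.congr_obj ((hKimem w).2.2) z').trans hz'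
    have ey : ∀ w, (Ki w).obj w.1 = y := by
      intro w
      have := Functor.congr_obj (hc1 w) y
      simp only [Functor.comp_obj, Functor.id_obj] at this
      rw [← hobj w]
      exact this
    -- the index map and componentwise transformation
    set idx : {w : C // F.obj w = F.obj y} → {z'' : C // F.obj z'' = F.obj z} :=
      fun w => ⟨(Ki w).obj z', pzw w⟩ with hidx
    have homTadd : ∀ (w : {w : C // F.obj w = F.obj y}) (u v : w.1 ⟶ z'),
        eqToHom (ey w).symm ≫ (Ki w).map (u + v)
          = (eqToHom (ey w).symm ≫ (Ki w).map u) + (eqToHom (ey w).symm ≫ (Ki w).map v) := by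
      intro w u v
      rw [(hKimem w).1.1 _ _ u v, Preadditive.comp_add]
    set Φ : (⨁ w : {w : C // F.obj w = F.obj y}, (w.1 ⟶ z')) →+
        (⨁ z'' : {z'' : C // F.obj z'' = F.obj z}, (y ⟶ z''.1)) :=
      DirectSum.toAddMonoid (fun w =>
        (DirectSum.of (fun z'' : {z'' : C // F.obj z'' = F.obj z} => (y ⟶ z''.1)) (idx w)).comp
          (AddMonoidHom.mk' (fun u => eqToHom (ey w).symm ≫ (Ki w).map u) (homTadd w))) with hΦ
    have key : ∀ ξ, starOutHom k F hLin y (F.obj z) (Φ ξ)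
        = starInHom k F hLin z' (F.obj y) ξ ≫ eqToHom hz' := by
      intro ξ
      induction ξ using DirectSum.induction_on with
      | zero => simp
      | of w u =>
        rw [hΦ]
        erw [DirectSum.toAddMonoid_of]
        rw [AddMonoidHom.comp_apply]
        erw [starOutHom_of, starInHom_of]
        have hcongr := Functor.congr_hom ((hKimem w).2.2) u
        simp only [Functor.comp_map] at hcongr
        simp only [AddMonoidHom.mk'_apply, Functor.map_comp, eqToHom_map, hcongr]
        simp [eqToHom_trans, Category.assoc]
      | add a b iha ihb =>
        rw [map_add, map_add, map_add, Preadditive.add_comp, iha, ihb]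
    obtain ⟨ξ, hξ⟩ := (hIn z' (F.obj y)).2 (F.map f ≫ eqToHom hz'.symm)
    have h1 : starOutHom k F hLin y (F.obj z) (Φ ξ) = F.map f := by
      rw [key ξ, hξ]; simp
    have h2 : starOutHom k F hLin y (F.obj z)
        (DirectSum.of (fun z'' : {z'' : C // F.obj z'' = F.obj z} => (y ⟶ z''.1)) ⟨z, rfl⟩ f)
        = F.map f := by
      erw [starOutHom_of]; simp
    have heq : Φ ξ = DirectSum.of (fun z'' : {z'' : C // F.obj z'' = F.obj z} => (y ⟶ z''.1))
        ⟨z, rfl⟩ f := (hOut y (F.obj z)).1 (h1.trans h2.symm)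
    have hex : ∃ w : {w : C // F.obj w = F.obj y}, idx w = ⟨z, rfl⟩ := by
      by_contra hne
      push_neg at hne
      have hzero : ∀ ζ, (Φ ζ) ⟨z, rfl⟩ = 0 := by
        intro ζ
        induction ζ using DirectSum.induction_on with
        | zero => simp
        | of w u =>
          rw [hΦ]
          erw [DirectSum.toAddMonoid_of]
          rw [AddMonoidHom.comp_apply]
          exact DirectSum.of_eq_of_ne _ _ _ (hne w).symm
        | add a b iha ihb =>
          rw [map_add, DirectSum.add_apply, iha, ihb, add_zero]
      have := congrArg (fun ζ => ζ (⟨z, rfl⟩ : {z'' : C // F.obj z'' = F.obj z})) heq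
      simp only at this
      rw [hzero ξ, DirectSum.of_eq_same] at this
      exact hf this.symm
    obtain ⟨w, hw⟩ := hex
    have hzz : (Ki w).obj z' = z := congrArg Subtype.val hw
    refine ⟨K w, hmem w, ?_⟩
    rw [← hzz]
    have := Functor.congr_obj (hc2 w) z'
    simpa using this
  intro z₁ z₂ h₁ h₂
  obtain ⟨M₁, hM₁, hM₁z⟩ := core z₁ h₁
  obtain ⟨M₂, hM₂, hM₂z⟩ := core z₂ h₂
  obtain ⟨M₁i, d1, d2⟩ := hM₁.2.1
  refine ⟨M₁i ⋙ M₂, memAut1_comp (memAut1_inv hM₁ d1 d2) hM₂, ?_⟩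
  have : M₁i.obj z₁ = z := by
    rw [← hM₁z]
    have := Functor.congr_obj d1 z
    simpa using this
  simp only [Functor.comp_obj, this, hM₂z]
end Step
section Step2
open CategoryTheory DirectSum
set_option linter.unusedSectionVars false
set_option maxHeartbeats 1000000
variable {k : Type w} [CommRing k]
variable {C : Type u} [Category.{v} C] [Preadditive C] [CategoryTheory.Linear k C]
variable {B : Type u} [Category.{v} B] [Preadditive B] [CategoryTheory.Linear k B]
variable {F : C ⥤ B}

lemma trans_step_bwd (hLin : IsLinearFunctor k F)
    (hOut : ∀ (x : C) (c : B), Function.Bijective (starOutHom k F hLin x c))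
    (hIn : ∀ (x : C) (c : B), Function.Bijective (starInHom k F hLin x c))
    {y z : C} (f : y ⟶ z) (hf : f ≠ 0)
    (hT : ∀ w w' : C, F.obj w = F.obj z → F.obj w' = F.obj z →
      ∃ H, MemAut1 k F H ∧ H.obj w = w') :
    ∀ y₁ y₂ : C, F.obj y₁ = F.obj y → F.obj y₂ = F.obj y →
      ∃ H, MemAut1 k F H ∧ H.obj y₁ = y₂ := by
  classical
  have core : ∀ y' : C, F.obj y' = F.obj y → ∃ H, MemAut1 k F H ∧ H.obj y = y' := by
    intro y' hy'
    have hsel : ∀ s : {s : C // F.obj s = F.obj z}, ∃ K Ki : C ⥤ C,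
        MemAut1 k F K ∧ K.obj z = s.1 ∧ K ⋙ Ki = 𝟭 C ∧ Ki ⋙ K = 𝟭 C := by
      intro s
      obtain ⟨K, hK, hKz⟩ := hT z s.1 rfl s.2
      obtain ⟨Ki, c1, c2⟩ := hK.2.1
      exact ⟨K, Ki, hK, hKz, c1, c2⟩
    choose K Ki hmem hobj hc1 hc2 using hsel
    have hKimem : ∀ s, MemAut1 k F (Ki s) := fun s => memAut1_inv (hmem s) (hc1 s) (hc2 s)
    have pw : ∀ s, F.obj ((Ki s).obj y') = F.obj y := fun s =>
      (Functor.congr_obj ((hKimem s).2.2) y').trans hy'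
    have ez : ∀ s, (Ki s).obj s.1 = z := by
      intro s
      have := Functor.congr_obj (hc1 s) z
      simp only [Functor.comp_obj, Functor.id_obj] at this
      rw [← hobj s]
      exact this
    set idx : {s : C // F.obj s = F.obj z} → {w : C // F.obj w = F.obj y} :=
      fun s => ⟨(Ki s).obj y', pw s⟩ with hidx
    have homTadd : ∀ (s : {s : C // F.obj s = F.obj z}) (u v : y' ⟶ s.1),
        (Ki s).map (u + v) ≫ eqToHom (ez s)
          = ((Ki s).map u ≫ eqToHom (ez s)) + ((Ki s).map v ≫ eqToHom (ez s)) := by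
      intro s u v
      rw [(hKimem s).1.1 _ _ u v, Preadditive.add_comp]
    set Φ : (⨁ s : {s : C // F.obj s = F.obj z}, (y' ⟶ s.1)) →+
        (⨁ w : {w : C // F.obj w = F.obj y}, (w.1 ⟶ z)) :=
      DirectSum.toAddMonoid (fun s =>
        (DirectSum.of (fun w : {w : C // F.obj w = F.obj y} => (w.1 ⟶ z)) (idx s)).comp
          (AddMonoidHom.mk' (fun u => (Ki s).map u ≫ eqToHom (ez s)) (homTadd s))) with hΦ
    have key : ∀ ξ, starInHom k F hLin z (F.obj y) (Φ ξ)
        = eqToHom hy'.symm ≫ starOutHom k F hLin y' (F.obj z) ξ := by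
      intro ξ
      induction ξ using DirectSum.induction_on with
      | zero => simp
      | of s u =>
        rw [hΦ]
        erw [DirectSum.toAddMonoid_of]
        rw [AddMonoidHom.comp_apply]
        erw [starOutHom_of, starInHom_of]
        have hcongr := Functor.congr_hom ((hKimem s).2.2) u
        simp only [Functor.comp_map] at hcongr
        simp only [AddMonoidHom.mk'_apply, Functor.map_comp, eqToHom_map, hcongr]
        simp [eqToHom_trans, Category.assoc]
      | add a b iha ihb =>
        rw [map_add, map_add, map_add, Preadditive.comp_add, iha, ihb]
    obtain ⟨ξ, hξ⟩ := (hOut y' (F.obj z)).2 (eqToHom hy' ≫ F.map f)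
    have h1 : starInHom k F hLin z (F.obj y) (Φ ξ) = F.map f := by
      rw [key ξ, hξ]; simp
    have h2 : starInHom k F hLin z (F.obj y)
        (DirectSum.of (fun w : {w : C // F.obj w = F.obj y} => (w.1 ⟶ z)) ⟨y, rfl⟩ f)
        = F.map f := by
      erw [starInHom_of]; simp
    have heq : Φ ξ = DirectSum.of (fun w : {w : C // F.obj w = F.obj y} => (w.1 ⟶ z))
        ⟨y, rfl⟩ f := (hIn z (F.obj y)).1 (h1.trans h2.symm)
    have hex : ∃ s : {s : C // F.obj s = F.obj z}, idx s = ⟨y, rfl⟩ := by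
      by_contra hne
      push_neg at hne
      have hzero : ∀ ζ, (Φ ζ) ⟨y, rfl⟩ = 0 := by
        intro ζ
        induction ζ using DirectSum.induction_on with
        | zero => simp
        | of s u =>
          rw [hΦ]
          erw [DirectSum.toAddMonoid_of]
          rw [AddMonoidHom.comp_apply]
          exact DirectSum.of_eq_of_ne _ _ _ (hne s).symm
        | add a b iha ihb =>
          rw [map_add, DirectSum.add_apply, iha, ihb, add_zero]
      have := congrArg (fun ζ => ζ (⟨y, rfl⟩ : {w : C // F.obj w = F.obj y})) heq
      simp only at this
      rw [hzero ξ, DirectSum.of_eq_same] at this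
      exact hf this.symm
    obtain ⟨s, hs⟩ := hex
    have hyy : (Ki s).obj y' = y := congrArg Subtype.val hs
    refine ⟨K s, hmem s, ?_⟩
    rw [← hyy]
    have := Functor.congr_obj (hc2 s) y'
    simpa using this
  intro y₁ y₂ h₁ h₂
  obtain ⟨M₁, hM₁, hM₁y⟩ := core y₁ h₁
  obtain ⟨M₂, hM₂, hM₂y⟩ := core y₂ h₂
  obtain ⟨M₁i, d1, d2⟩ := hM₁.2.1
  refine ⟨M₁i ⋙ M₂, memAut1_comp (memAut1_inv hM₁ d1 d2) hM₂, ?_⟩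
  have : M₁i.obj y₁ = y := by
    rw [← hM₁y]
    have := Functor.congr_obj d1 y
    simpa using this
  simp only [Functor.comp_obj, this, hM₂y]
end Step2
section Glob
open CategoryTheory DirectSum
set_option linter.unusedSectionVars false
variable {k : Type w} [CommRing k]
variable {C : Type u} [Category.{v} C] [Preadditive C] [CategoryTheory.Linear k C]
variable {B : Type u} [Category.{v} B] [Preadditive B] [CategoryTheory.Linear k B]
variable {F : C ⥤ B}

lemma trans_all (hF : IsGaloisCovering k F) :
    ∀ y y' : C, F.obj y' = F.obj y → ∃ H, MemAut1 k F H ∧ H.obj y = y' := by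
  obtain ⟨⟨hLin, hSurj, hOut, hIn⟩, hConn, b₀, htrans⟩ := hF
  obtain ⟨x₀, hx₀⟩ := hSurj b₀
  set T : C → Prop := fun y => ∀ w w' : C, F.obj w = F.obj y → F.obj w' = F.obj y →
      ∃ H, MemAut1 k F H ∧ H.obj w = w' with hT
  have hiff : ∀ a a', Relation.EqvGen (fun p q : C => ∃ f : p ⟶ q, f ≠ 0) a a' →
      (T a ↔ T a') := by
    intro a a' h
    induction h with
    | rel p q hpq =>
      obtain ⟨f, hf⟩ := hpq
      exact ⟨fun hp => trans_step_fwd hLin hOut hIn f hf hp,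
             fun hq => trans_step_bwd hLin hOut hIn f hf hq⟩
    | refl p => exact Iff.rfl
    | symm p q _ ih => exact ih.symm
    | trans p q r _ _ ih1 ih2 => exact ih1.trans ih2
  have hbase : T x₀ := by
    intro w w' hw hw'
    exact htrans w w' (hw.trans hx₀) (hw'.trans hx₀)
  have hall : ∀ y : C, T y := fun y => (hiff x₀ y (hConn x₀ y)).1 hbase
  intro y y' h
  exact hall y y y' rfl h
end Glob
theorem euler_derivations_differ_by_inner (k : Type w) [CommRing k]
    {C : Type u} [Category.{v} C] [Preadditive C] [CategoryTheory.Linear k C]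
    {B : Type u} [Category.{v} B] [Preadditive B] [CategoryTheory.Linear k B]
    (F : C ⥤ B) (hF : IsGaloisCovering k F)
    (x : B → C) (hx : ∀ b : B, F.obj (x b) = b)
    (t : B → (C ⥤ C)) (ht : ∀ b : B, MemAut1 k F (t b))
    (χ : (C ⥤ C) → k)
    (hχ : ∀ s s' : C ⥤ C, MemAut1 k F s → MemAut1 k F s' → χ (s ⋙ s') = χ s + χ s')
    (D D' : ∀ b c : B, (b ⟶ c) →ₗ[k] (b ⟶ c))
    (hD : ∀ (s : C ⥤ C), MemAut1 k F s → ∀ (b c : B) (f : b ⟶ c),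
      f ∈ gradeSet F x s b c → D b c f = χ s • f)
    (hD' : ∀ (s : C ⥤ C), MemAut1 k F s → ∀ (b c : B) (f : b ⟶ c),
      f ∈ gradeSet F (fun b => (t b).obj (x b)) s b c → D' b c f = χ s • f) :
    ∀ (b c : B) (f : b ⟶ c),
      D b c f - D' b c f = (χ (t c) - χ (t b)) • f ∧
      D b c f - D' b c f = f ≫ (χ (t c) • 𝟙 c) - (χ (t b) • 𝟙 b) ≫ f := by
  classical
  have htransAll := trans_all hF
  obtain ⟨⟨hLin, hSurj, hOut, hIn⟩, -, -⟩ := hF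
  -- character facts
  have hχid : χ (𝟭 C) = 0 := by
    have e := hχ (𝟭 C) (𝟭 C) memAut1_id memAut1_id
    rw [Functor.id_comp] at e
    exact right_eq_add.mp e
  have hχinv : ∀ (s si : C ⥤ C), MemAut1 k F s → MemAut1 k F si →
      s ⋙ si = 𝟭 C → χ si = -χ s := by
    intro s si hs hsi hcomp
    have e := hχ s si hs hsi
    rw [hcomp, hχid] at e
    linear_combination -e
  intro b c f
  have main : D b c f - D' b c f = (χ (t c) - χ (t b)) • f := by
    obtain ⟨tci, etc1, etc2⟩ := (ht c).2.1
    have htci : MemAut1 k F tci := memAut1_inv (ht c) etc1 etc2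
    obtain ⟨ξ, hξ⟩ := (hOut (x b) c).2 (eqToHom (hx b) ≫ f)
    have claim : ∀ ζ, D b c (eqToHom (hx b).symm ≫ starOutHom k F hLin (x b) c ζ)
          - D' b c (eqToHom (hx b).symm ≫ starOutHom k F hLin (x b) c ζ)
        = (χ (t c) - χ (t b)) • (eqToHom (hx b).symm ≫ starOutHom k F hLin (x b) c ζ) := by
      intro ζ
      induction ζ using DirectSum.induction_on with
      | zero => simp
      | of w u =>
        erw [starOutHom_of]
        set g : b ⟶ c := eqToHom (hx b).symm ≫ F.map u ≫ eqToHom w.2 with hg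
        obtain ⟨s, hs, hsx⟩ := htransAll (x c) w.1 (w.2.trans (hx c).symm)
        have h₂ : F.obj (s.obj (x c)) = c := by rw [hsx]; exact w.2
        have mem1 : g ∈ gradeSet F x s b c := by
          refine ⟨(hx b).symm, h₂, u ≫ eqToHom hsx.symm, ?_⟩
          rw [Functor.map_comp, eqToHom_map]
          simp [Category.assoc, eqToHom_trans]
          exact hg
        have hstb := (ht b).2.2
        have hstc := (ht c).2.2
        set s' : C ⥤ C := tci ⋙ s ⋙ t b with hs'def
        have hs' : MemAut1 k F s' := memAut1_comp htci (memAut1_comp hs (ht b))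
        have hχs' : χ s' = -χ (t c) + (χ s + χ (t b)) := by
          rw [hs'def, hχ tci (s ⋙ t b) htci (memAut1_comp hs (ht b)),
            hχ s (t b) hs (ht b), hχinv (t c) tci (ht c) htci etc1]
        have hfix : tci.obj ((t c).obj (x c)) = x c := by
          have e := Functor.congr_obj etc1 (x c)
          simpa using e
        have hobj' : s'.obj ((t c).obj (x c)) = (t b).obj (s.obj (x c)) := by
          show (t b).obj (s.obj (tci.obj ((t c).obj (x c)))) = _
          rw [hfix]
        have eb : F.obj ((t b).obj (x b)) = b := by
          have e := Functor.congr_obj hstb (x b)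
          simp only [Functor.comp_obj] at e
          rw [e, hx b]
        have h₂' : F.obj (s'.obj ((t c).obj (x c))) = c := by
          rw [hobj']
          have e := Functor.congr_obj hstb (s.obj (x c))
          simp only [Functor.comp_obj] at e
          rw [e, h₂]
        have mem2 : g ∈ gradeSet F (fun b => (t b).obj (x b)) s' b c := by
          refine ⟨eb.symm, h₂', (t b).map (u ≫ eqToHom hsx.symm) ≫ eqToHom hobj'.symm, ?_⟩
          have hcongr := Functor.congr_hom hstb (u ≫ eqToHom hsx.symm)
          simp only [Functor.comp_map] at hcongr
          rw [Functor.map_comp, eqToHom_map, hcongr]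
          rw [Functor.map_comp, eqToHom_map]
          simp [Category.assoc, eqToHom_trans]
          exact hg
        rw [hD s hs b c g mem1, hD' s' hs' b c g mem2, hχs', ← sub_smul]
        congr 1
        ring
      | add ζ₁ ζ₂ ih₁ ih₂ =>
        rw [map_add, Preadditive.comp_add, map_add, map_add, smul_add, ← ih₁, ← ih₂]
        abel
    have h' : eqToHom (hx b).symm ≫ (eqToHom (hx b) ≫ f) = f := by simp
    have := claim ξ
    rw [hξ, h'] at this
    exact this
  refine ⟨main, main.trans ?_⟩
  rw [Linear.comp_smul, Linear.smul_comp, Category.comp_id, Category.id_comp, sub_smul]
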